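/- Let δ, p : ℝ → ℝ be bounded, continuous and almost automorphic functions with δ(t) > 0 and p(t) > 0 for all t ∈ ℝ, and suppose δ is ergodic with mean M(δ) > 0. Let τ > 0. Then there exists γ₀ > 0, depending only on δ, p and τ, such that for every nonnegative Lipschitz function g : ℝ → ℝ with Lipschitz constant γ ≤ γ₀, the delayed equation y'(t) = −δ(t)·y(t) + p(t)·g(y(t−τ)) has exactly one bounded almost automorphic differentiable solution y : ℝ → ℝ. -/

import Mathlib

open MeasureTheory Filter Topology

/-- A continuous function `ψ : ℝ → V` into a Banach space is almost automorphic if for every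
sequence of reals there is a subsequence `(τₙ)` and a function `ψ̃` with
`ψ(t+τₙ) → ψ̃(t)` and `ψ̃(t−τₙ) → ψ(t)` pointwise on `ℝ`. -/
def AlmostAutomorphic {V : Type*} [NormedAddCommGroup V] (ψ : ℝ → V) : Prop :=
  Continuous ψ ∧ ∀ σ : ℕ → ℝ, ∃ k : ℕ → ℕ, StrictMono k ∧ ∃ ψt : ℝ → V,
    (∀ t : ℝ, Tendsto (fun n => ψ (t + σ (k n))) atTop (𝓝 (ψt t))) ∧
    (∀ t : ℝ, Tendsto (fun n => ψt (t - σ (k n))) atTop (𝓝 (ψ t)))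

/-- A bounded continuous function `f : ℝ → ℝ` is ergodic with mean `M` if
`(1/(2T)) ∫_{−T+ξ}^{T+ξ} f(s) ds → M` as `T → ∞`, uniformly with respect to `ξ ∈ ℝ`. -/
def ErgodicMeanR (f : ℝ → ℝ) (M : ℝ) : Prop :=
  ∀ ε > 0, ∃ T₁ > (0 : ℝ), ∀ T ≥ T₁, ∀ ξ : ℝ,
    |(2 * T)⁻¹ * (∫ s in (-T + ξ)..(T + ξ), f s) - M| < ε

open scoped ENNReal NNReal
open MeasureTheory Filter Topology Set

namespace AAPrelim

lemma expIntegrableIic (a t : ℝ) (ha : 0 < a) :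
    IntegrableOn (fun s => Real.exp (a * s)) (Set.Iic t) := by
  have hii : ∀ y : ℝ, IntervalIntegrable (fun s => Real.exp (a * s)) volume y t :=
    fun y => (Real.continuous_exp.comp (continuous_const.mul continuous_id)).intervalIntegrable y t
  refine integrableOn_Iic_of_intervalIntegral_norm_bounded (Real.exp (a * t) / a) t
    (fun y => (hii y).1) tendsto_id (Eventually.of_forall fun y => ?_)
  rcases le_total y t with h | h
  · have : (∫ x in y..t, ‖Real.exp (a * x)‖) = ∫ x in y..t, Real.exp (a * x) := by
      congr 1; ext x; exact Real.norm_of_nonneg (Real.exp_pos _).le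
    rw [this]
    have : (∫ x in y..t, Real.exp (a * x)) = (Real.exp (a * t) - Real.exp (a * y)) / a := by
      rw [intervalIntegral.integral_comp_mul_left (fun u => Real.exp u) ha.ne',
        integral_exp, smul_eq_mul]
      field_simp
    rw [this]
    have := (Real.exp_pos (a * y)).le
    have hrt := Real.exp_pos (a*t)
    rw [div_le_div_iff_of_pos_right ha]
    linarith
  · rw [intervalIntegral.integral_of_ge h]
    simp only [neg_le]
    have h1 : (0:ℝ) ≤ ∫ x in Set.Ioc t y, ‖Real.exp (a * x)‖ :=
      setIntegral_nonneg measurableSet_Ioc fun x _ => norm_nonneg _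
    have h2 : 0 < Real.exp (a * t) / a := div_pos (Real.exp_pos _) ha
    linarith

lemma expIntegralIic (a t : ℝ) (ha : 0 < a) :
    ∫ s in Set.Iic t, Real.exp (a * s) = Real.exp (a * t) / a := by
  have hderiv : ∀ x ∈ Set.Iic t, HasDerivAt (fun s => Real.exp (a * s) / a)
      (Real.exp (a * x)) x := by
    intro x _
    have h1 : HasDerivAt (fun s : ℝ => a * s) a x := by
      simpa using (hasDerivAt_id x).const_mul a
    have := (h1.exp).div_const a
    simpa [mul_comm, mul_div_assoc, mul_div_cancel_left₀ _ ha.ne'] using this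
  have htend : Tendsto (fun s => Real.exp (a * s) / a) atBot (𝓝 0) := by
    have : Tendsto (fun s : ℝ => a * s) atBot atBot :=
      tendsto_id.const_mul_atBot ha
    have := (Real.tendsto_exp_atBot.comp this).div_const a
    simpa using this
  simpa using integral_Iic_of_hasDerivAt_of_tendsto' hderiv (expIntegrableIic a t ha) htend

/-- The basic one-sided exponential bound on an `Iic`-integral. -/
lemma abs_integral_Iic_le (a t C : ℝ) (ha : 0 < a) (hC : 0 ≤ C) (f : ℝ → ℝ)
    (hb : ∀ s ≤ t, |f s| ≤ C * Real.exp (a * (s - t))) :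
    |∫ s in Set.Iic t, f s| ≤ C / a := by
  have hint : IntegrableOn (fun s => C * Real.exp (-(a*t)) * Real.exp (a * s)) (Set.Iic t) :=
    (expIntegrableIic a t ha).const_mul _
  have hbound : ∀ᵐ s ∂(volume.restrict (Set.Iic t)),
      ‖f s‖ ≤ C * Real.exp (-(a*t)) * Real.exp (a * s) := by
    rw [ae_restrict_iff' measurableSet_Iic]
    refine Eventually.of_forall fun s hs => ?_
    have := hb s hs
    calc ‖f s‖ = |f s| := rfl
      _ ≤ C * Real.exp (a * (s - t)) := this
      _ = C * Real.exp (-(a*t)) * Real.exp (a * s) := by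
          rw [mul_assoc, ← Real.exp_add]; ring_nf
  calc |∫ s in Set.Iic t, f s| = ‖∫ s in Set.Iic t, f s‖ := rfl
    _ ≤ ∫ s in Set.Iic t, C * Real.exp (-(a*t)) * Real.exp (a * s) :=
        norm_integral_le_of_norm_le hint hbound
    _ = C * Real.exp (-(a*t)) * (Real.exp (a*t) / a) := by
        rw [MeasureTheory.integral_const_mul, expIntegralIic a t ha]
    _ = C / a := by
        rw [mul_assoc, ← mul_div_assoc, ← Real.exp_add]
        simp [div_eq_mul_inv]

lemma integral_Iic_comp_add_right (f : ℝ → ℝ) (t c : ℝ) :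
    ∫ s in Set.Iic t, f (s + c) = ∫ s in Set.Iic (t + c), f s := by
  have hmp : MeasurePreserving (fun x : ℝ => x + c) volume volume :=
    measurePreserving_add_right volume c
  have hemb : MeasurableEmbedding (fun x : ℝ => x + c) :=
    (MeasurableEquiv.addRight c).measurableEmbedding
  have := hmp.setIntegral_preimage_emb hemb f (Set.Iic (t + c))
  have hpre : (fun x : ℝ => x + c) ⁻¹' (Set.Iic (t + c)) = Set.Iic t := by
    ext x; simp [Set.mem_Iic]
  rwa [hpre] at this

lemma ennreal_limsup_add_const (x : ℕ → ℝ≥0∞) (c : ℝ≥0∞) :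
    limsup (fun n => x n + c) atTop ≤ limsup x atTop + c := by
  rw [limsup_eq_iInf_iSup_of_nat, limsup_eq_iInf_iSup_of_nat, ENNReal.iInf_add]
  refine le_iInf fun m => ?_
  refine iInf_le_of_le m ?_
  refine iSup₂_le fun k hk => ?_
  exact add_le_add (le_biSup x hk) le_rfl

lemma ennreal_limsup_add_tendsto_zero {x e : ℕ → ℝ≥0∞}
    (he : Tendsto e atTop (𝓝 0)) :
    limsup (fun n => x n + e n) atTop ≤ limsup x atTop := by
  refine ENNReal.le_of_forall_pos_le_add fun ε hε hfin => ?_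
  have hev : ∀ᶠ n in atTop, e n < (ε : ℝ≥0∞) := by
    refine he.eventually_lt_const ?_
    exact_mod_cast hε
  have h1 : limsup (fun n => x n + e n) atTop ≤ limsup (fun n => x n + (ε : ℝ≥0∞)) atTop := by
    refine limsup_le_limsup ?_
    filter_upwards [hev] with n hn using add_le_add le_rfl hn.le
  exact h1.trans (ennreal_limsup_add_const x ε)

end AAPrelim

open AAPrelim BoundedContinuousFunction

noncomputable section

structure AASetup where
  a : ℝ
  b : ℝ
  Bd : ℝ
  Bp : ℝ
  τ : ℝ
  g : ℝ → ℝ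
  γ : ℝ≥0
  ha : 0 < a
  hb : 0 ≤ b
  hBd : 0 ≤ Bd
  hBp : 0 < Bp
  hτ : 0 < τ
  hg0 : ∀ x, 0 ≤ g x
  hgl : LipschitzWith γ g
  hγ : (γ : ℝ) * (Bp * Real.exp b / a) ≤ 1/2

namespace AASetup

variable (S : AASetup)

/-- The master kernel constant. -/
def K : ℝ := S.Bp * Real.exp S.b / S.a

lemma K_pos : 0 < S.K := div_pos (mul_pos S.hBp (Real.exp_pos _)) S.ha

lemma K_nonneg : 0 ≤ S.K := S.K_pos.le

/-- bound for `g ∘ u` for a bounded function `u`. -/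
def Cg (u : ℝ →ᵇ ℝ) : ℝ := S.g 0 + (S.γ : ℝ) * ‖u‖

lemma Cg_nonneg (u : ℝ →ᵇ ℝ) : 0 ≤ S.Cg u :=
  add_nonneg (S.hg0 0) (mul_nonneg (S.γ.coe_nonneg) (norm_nonneg _))

lemma abs_g_comp_le (u : ℝ →ᵇ ℝ) (x : ℝ) : |S.g (u x)| ≤ S.Cg u := by
  have h1 : |S.g (u x) - S.g 0| ≤ (S.γ : ℝ) * |u x - 0| := by
    have := S.hgl.dist_le_mul (u x) 0
    simpa [Real.dist_eq] using this
  have h2 : |u x| ≤ ‖u‖ := by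
    simpa [Real.norm_eq_abs] using u.norm_coe_le_norm x
  rw [abs_of_nonneg (S.hg0 _)]
  have := abs_sub_abs_le_abs_sub (S.g (u x)) (S.g 0)
  have h3 : |S.g (u x)| ≤ |S.g 0| + (S.γ : ℝ) * |u x| := by
    simp only [sub_zero] at h1
    nlinarith [abs_nonneg (S.g (u x)), abs_nonneg (S.g 0)]
  calc S.g (u x) ≤ |S.g (u x)| := le_abs_self _
    _ ≤ |S.g 0| + (S.γ : ℝ) * |u x| := h3
    _ ≤ S.g 0 + (S.γ : ℝ) * ‖u‖ := by
        rw [abs_of_nonneg (S.hg0 0)]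
        have := mul_le_mul_of_nonneg_left h2 (S.γ.coe_nonneg)
        linarith

end AASetup

/-- Admissible coefficient pairs. -/
structure Adm (S : AASetup) where
  δ : ℝ → ℝ
  p : ℝ → ℝ
  δm : Measurable δ
  pm : Measurable p
  δ0 : ∀ t, 0 ≤ δ t
  p0 : ∀ t, 0 ≤ p t
  δle : ∀ t, δ t ≤ S.Bd
  ple : ∀ t, p t ≤ S.Bp
  ilb : ∀ s t : ℝ, s ≤ t → S.a * (t - s) - S.b ≤ ∫ u in s..t, δ u

namespace Adm

variable {S : AASetup} (A : Adm S)

lemma δii (x y : ℝ) : IntervalIntegrable A.δ volume x y := by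
  rw [intervalIntegrable_iff]
  refine Integrable.mono' (g := fun _ : ℝ => S.Bd)
    (integrableOn_const measure_Ioc_lt_top.ne)
    (A.δm.aestronglyMeasurable.restrict) ?_
  refine Eventually.of_forall fun s => ?_
  rw [Real.norm_eq_abs, abs_of_nonneg (A.δ0 s)]
  exact A.δle s

/-- Antiderivative of `δ`. -/
def D (t : ℝ) : ℝ := ∫ u in (0:ℝ)..t, A.δ u

lemma D_sub (s t : ℝ) : A.D t - A.D s = ∫ u in s..t, A.δ u := by
  rw [D, D]
  exact intervalIntegral.integral_interval_sub_left (A.δii 0 t) (A.δii 0 s)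

lemma D_lb {s t : ℝ} (h : s ≤ t) : S.a * (t - s) - S.b ≤ A.D t - A.D s := by
  rw [A.D_sub s t]; exact A.ilb s t h

lemma D_cont : Continuous A.D :=
  intervalIntegral.continuous_primitive (fun x y => A.δii x y) 0

lemma ker_le {s t : ℝ} (h : s ≤ t) :
    Real.exp (A.D s - A.D t) ≤ Real.exp S.b * Real.exp (S.a * (s - t)) := by
  rw [← Real.exp_add]
  apply Real.exp_le_exp.2
  have := A.D_lb h
  nlinarith

variable (u : ℝ →ᵇ ℝ)

/-- Integrand of the solution operator. -/
def integrand (t s : ℝ) : ℝ :=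
  Real.exp (A.D s - A.D t) * (A.p s * S.g (u (s - S.τ)))

lemma integrand_nonneg (t s : ℝ) : 0 ≤ A.integrand u t s :=
  mul_nonneg (Real.exp_pos _).le (mul_nonneg (A.p0 s) (S.hg0 _))

lemma integrand_abs_le {t s : ℝ} (h : s ≤ t) :
    |A.integrand u t s| ≤ (Real.exp S.b * S.Bp * S.Cg u) * Real.exp (S.a * (s - t)) := by
  rw [abs_of_nonneg (A.integrand_nonneg u t s)]
  rw [integrand]
  have h1 := A.ker_le h
  have h2 : A.p s * S.g (u (s - S.τ)) ≤ S.Bp * S.Cg u := by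
    have hg := S.abs_g_comp_le u (s - S.τ)
    have hg' : S.g (u (s - S.τ)) ≤ S.Cg u := (le_abs_self _).trans hg
    have := mul_le_mul (A.ple s) hg' (S.hg0 _) S.hBp.le
    nlinarith [A.p0 s, S.hg0 (u (s - S.τ))]
  have h3 : 0 ≤ A.p s * S.g (u (s - S.τ)) := mul_nonneg (A.p0 s) (S.hg0 _)
  calc Real.exp (A.D s - A.D t) * (A.p s * S.g (u (s - S.τ)))
      ≤ (Real.exp S.b * Real.exp (S.a * (s - t))) * (S.Bp * S.Cg u) := by
        exact mul_le_mul h1 h2 h3 (mul_nonneg (Real.exp_pos _).le (Real.exp_pos _).le)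
    _ = (Real.exp S.b * S.Bp * S.Cg u) * Real.exp (S.a * (s - t)) := by ring

lemma integrand_meas (t : ℝ) : Measurable (fun s => A.integrand u t s) := by
  apply Measurable.mul
  · exact (Real.continuous_exp.comp ((A.D_cont).sub continuous_const)).measurable
  · exact A.pm.mul ((S.hgl.continuous.comp
      (u.continuous.comp (continuous_id.sub continuous_const))).measurable)

lemma integrand_integrableOn (t : ℝ) :
    IntegrableOn (fun s => A.integrand u t s) (Set.Iic t) := by
  refine Integrable.mono'
    ((expIntegrableIic S.a t S.ha).const_mul
      (Real.exp S.b * S.Bp * S.Cg u * Real.exp (-(S.a * t))))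
    ((A.integrand_meas u t).aestronglyMeasurable.restrict) ?_
  rw [ae_restrict_iff' measurableSet_Iic]
  refine Eventually.of_forall fun s hs => ?_
  have h1 := A.integrand_abs_le u (hs : s ≤ t)
  have h2 : S.a * (s - t) = -(S.a * t) + S.a * s := by ring
  rw [Real.norm_eq_abs]
  calc |A.integrand u t s| ≤ (Real.exp S.b * S.Bp * S.Cg u) * Real.exp (S.a * (s - t)) := h1
    _ = Real.exp S.b * S.Bp * S.Cg u * Real.exp (-(S.a * t)) * Real.exp (S.a * s) := by
        rw [h2, Real.exp_add]; ring

/-- The solution operator, as a bare function. -/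
def PhiFun (t : ℝ) : ℝ := ∫ s in Set.Iic t, A.integrand u t s

lemma PhiFun_abs_le (t : ℝ) : |A.PhiFun u t| ≤ S.K * S.Cg u := by
  have h := abs_integral_Iic_le S.a t (Real.exp S.b * S.Bp * S.Cg u) S.ha
    (mul_nonneg (mul_nonneg (Real.exp_pos _).le S.hBp.le) (S.Cg_nonneg u))
    (fun s => A.integrand u t s)
    (fun s hs => A.integrand_abs_le u hs)
  calc |A.PhiFun u t| ≤ Real.exp S.b * S.Bp * S.Cg u / S.a := h
    _ = S.K * S.Cg u := by rw [AASetup.K]; ring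

/-- Integrand with the `exp (A.D t)` factor removed. -/
def qfun (s : ℝ) : ℝ := Real.exp (A.D s) * (A.p s * S.g (u (s - S.τ)))

lemma qfun_eq (t s : ℝ) : A.qfun u s = Real.exp (A.D t) * A.integrand u t s := by
  have h : A.D t + (A.D s - A.D t) = A.D s := by ring
  rw [qfun, integrand]
  conv_rhs => rw [← mul_assoc, ← Real.exp_add, h]

lemma qfun_integrableOn_Iic (t : ℝ) : IntegrableOn (A.qfun u) (Set.Iic t) := by
  have := (A.integrand_integrableOn u t).const_mul (Real.exp (A.D t))
  exact IntegrableOn.congr_fun this (fun s _ => (A.qfun_eq u t s).symm) measurableSet_Iic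

lemma qfun_ii (x y : ℝ) : IntervalIntegrable (A.qfun u) volume x y := by
  rw [intervalIntegrable_iff]
  exact (A.qfun_integrableOn_Iic u (max x y)).mono_set (fun z hz => hz.2)

lemma PhiFun_eq (t : ℝ) :
    A.PhiFun u t = Real.exp (-(A.D t)) *
      ((∫ s in Set.Iic (0:ℝ), A.qfun u s) + ∫ s in (0:ℝ)..t, A.qfun u s) := by
  have h0 : (∫ s in (0:ℝ)..t, A.qfun u s) =
      (∫ s in Set.Iic t, A.qfun u s) - ∫ s in Set.Iic (0:ℝ), A.qfun u s :=
    (intervalIntegral.integral_Iic_sub_Iic (A.qfun_integrableOn_Iic u 0) (A.qfun_integrableOn_Iic u t)).symm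
  rw [h0]
  have h1 : (∫ s in Set.Iic (0:ℝ), A.qfun u s) +
      ((∫ s in Set.Iic t, A.qfun u s) - ∫ s in Set.Iic (0:ℝ), A.qfun u s) =
      ∫ s in Set.Iic t, A.qfun u s := by ring
  rw [h1, PhiFun, ← MeasureTheory.integral_const_mul]
  refine setIntegral_congr_fun measurableSet_Iic fun s _ => ?_
  rw [A.qfun_eq u t s, ← mul_assoc, ← Real.exp_add]
  simp

lemma PhiFun_continuous : Continuous (A.PhiFun u) := by
  have : Continuous (fun t => Real.exp (-(A.D t)) *
      ((∫ s in Set.Iic (0:ℝ), A.qfun u s) + ∫ s in (0:ℝ)..t, A.qfun u s)) := by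
    refine Continuous.mul (Real.continuous_exp.comp (A.D_cont).neg) ?_
    exact continuous_const.add
      (intervalIntegral.continuous_primitive (fun x y => A.qfun_ii u x y) 0)
  exact (continuous_congr (fun t => (A.PhiFun_eq u t).symm)).1 this

/-- The solution operator, as a map of bounded continuous functions. -/
def Phi (u : ℝ →ᵇ ℝ) : ℝ →ᵇ ℝ :=
  BoundedContinuousFunction.ofNormedAddCommGroup (A.PhiFun u) (A.PhiFun_continuous u)
    (S.K * S.Cg u) (fun t => by
      rw [Real.norm_eq_abs]; exact A.PhiFun_abs_le u t)

lemma Phi_apply (t : ℝ) : A.Phi u t = ∫ s in Set.Iic t, A.integrand u t s := rfl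

lemma dist_apply_le (v : ℝ →ᵇ ℝ) (t : ℝ) :
    |A.Phi u t - A.Phi v t| ≤ ((S.γ : ℝ) * S.K) * dist u v := by
  rw [A.Phi_apply u t, A.Phi_apply v t,
    ← integral_sub (A.integrand_integrableOn u t) (A.integrand_integrableOn v t)]
  have hC : 0 ≤ Real.exp S.b * S.Bp * ((S.γ : ℝ) * dist u v) :=
    mul_nonneg (mul_nonneg (Real.exp_pos _).le S.hBp.le)
      (mul_nonneg S.γ.coe_nonneg dist_nonneg)
  have h := abs_integral_Iic_le S.a t (Real.exp S.b * S.Bp * ((S.γ : ℝ) * dist u v)) S.ha hC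
    (fun s => A.integrand u t s - A.integrand v t s) (fun s hs => ?_)
  · calc |∫ s in Set.Iic t, (A.integrand u t s - A.integrand v t s)|
        ≤ Real.exp S.b * S.Bp * ((S.γ : ℝ) * dist u v) / S.a := h
      _ = ((S.γ : ℝ) * S.K) * dist u v := by rw [AASetup.K]; ring
  · -- pointwise bound
    show |A.integrand u t s - A.integrand v t s| ≤ _
    have hdiff : A.integrand u t s - A.integrand v t s =
        Real.exp (A.D s - A.D t) * A.p s *
          (S.g (u (s - S.τ)) - S.g (v (s - S.τ))) := by
      rw [integrand, integrand]; ring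
    rw [hdiff, abs_mul, abs_mul]
    have h1 : |Real.exp (A.D s - A.D t)| = Real.exp (A.D s - A.D t) :=
      abs_of_nonneg (Real.exp_pos _).le
    have h2 : |A.p s| = A.p s := abs_of_nonneg (A.p0 s)
    have h3 : |S.g (u (s - S.τ)) - S.g (v (s - S.τ))| ≤ (S.γ : ℝ) * dist u v := by
      have := S.hgl.dist_le_mul (u (s - S.τ)) (v (s - S.τ))
      rw [Real.dist_eq] at this
      refine this.trans ?_
      have := BoundedContinuousFunction.dist_coe_le_dist (f := u) (g := v) (s - S.τ)
      rw [Real.dist_eq] at this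
      exact mul_le_mul_of_nonneg_left this S.γ.coe_nonneg
    rw [h1, h2]
    calc Real.exp (A.D s - A.D t) * A.p s * |S.g (u (s - S.τ)) - S.g (v (s - S.τ))|
        ≤ (Real.exp S.b * Real.exp (S.a * (s - t))) * S.Bp * ((S.γ : ℝ) * dist u v) := by
          refine mul_le_mul ?_ h3 (abs_nonneg _) ?_
          · exact mul_le_mul (A.ker_le hs) (A.ple s) (A.p0 s)
              (mul_nonneg (Real.exp_pos _).le (Real.exp_pos _).le)
          · exact mul_nonneg (mul_nonneg (Real.exp_pos _).le (Real.exp_pos _).le) S.hBp.le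
      _ = Real.exp S.b * S.Bp * ((S.γ : ℝ) * dist u v) * Real.exp (S.a * (s - t)) := by ring

lemma contracting : ContractingWith (1/2 : ℝ≥0) A.Phi := by
  constructor
  · have h12 : ((1/2 : ℝ≥0) : ℝ) < ((1:ℝ≥0) : ℝ) := by norm_num
    exact_mod_cast h12
  · refine LipschitzWith.of_dist_le_mul fun u v => ?_
    rw [BoundedContinuousFunction.dist_le (by positivity)]
    intro t
    rw [Real.dist_eq]
    refine (A.dist_apply_le u v t).trans ?_
    have : ((S.γ : ℝ) * S.K) ≤ 1/2 := by
      have := S.hγ; rw [AASetup.K]; linarith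
    have hd : (0:ℝ) ≤ dist u v := dist_nonneg
    calc ((S.γ : ℝ) * S.K) * dist u v ≤ (1/2) * dist u v :=
          mul_le_mul_of_nonneg_right this hd
      _ = ((1/2 : ℝ≥0) : ℝ) * dist u v := by norm_num

/-- The unique bounded continuous fixed point of the solution operator. -/
def sol : ℝ →ᵇ ℝ := ContractingWith.fixedPoint A.Phi A.contracting

lemma sol_fixed : A.Phi A.sol = A.sol := A.contracting.fixedPoint_isFixedPt

lemma sol_eq (t : ℝ) : A.sol t = ∫ s in Set.Iic t, A.integrand A.sol t s := by
  conv_lhs => rw [← A.sol_fixed]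
  rfl

lemma eq_sol_of_fixed {u : ℝ →ᵇ ℝ} (hu : A.Phi u = u) : u = A.sol :=
  A.contracting.fixedPoint_unique hu

lemma sol_norm_le : ‖A.sol‖ ≤ 2 * S.K * S.g 0 := by
  have h1 : ∀ t, |A.sol t| ≤ S.K * S.Cg A.sol := by
    intro t
    have := A.PhiFun_abs_le A.sol t
    have h2 : A.sol t = A.PhiFun A.sol t := by
      conv_lhs => rw [← A.sol_fixed]
      rfl
    rwa [← h2] at this
  have h3 : ‖A.sol‖ ≤ S.K * S.Cg A.sol := by
    refine BoundedContinuousFunction.norm_le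
      (mul_nonneg S.K_nonneg (S.Cg_nonneg _)) |>.2 fun t => ?_
    rw [Real.norm_eq_abs]; exact h1 t
  rw [AASetup.Cg, mul_add] at h3
  have h4 : S.K * ((S.γ : ℝ) * ‖A.sol‖) ≤ (1/2) * ‖A.sol‖ := by
    have hγK : (S.γ : ℝ) * S.K ≤ 1/2 := by
      have := S.hγ; rw [AASetup.K]; linarith
    nlinarith [norm_nonneg A.sol, S.K_nonneg, S.γ.coe_nonneg]
  nlinarith [norm_nonneg A.sol, S.K_nonneg, S.hg0 0]

lemma sol_abs_le (t : ℝ) : |A.sol t| ≤ 2 * S.K * S.g 0 := by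
  have := BoundedContinuousFunction.norm_coe_le_norm A.sol t
  rw [Real.norm_eq_abs] at this
  exact this.trans A.sol_norm_le

end Adm

namespace Adm

variable {S : AASetup} (A : Adm S)

lemma qfun_int_eq (u : ℝ →ᵇ ℝ) (t : ℝ) :
    ∫ s in Set.Iic t, A.qfun u s = Real.exp (A.D t) * A.PhiFun u t := by
  rw [PhiFun, ← MeasureTheory.integral_const_mul]
  exact setIntegral_congr_fun measurableSet_Iic fun s _ => A.qfun_eq u t s

lemma D_hasDerivAt (hδc : Continuous A.δ) (t : ℝ) : HasDerivAt A.D (A.δ t) t :=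
  intervalIntegral.integral_hasDerivAt_right (A.δii 0 t)
    (hδc.aestronglyMeasurable.stronglyMeasurableAtFilter) hδc.continuousAt

lemma qfun_continuous (hpc : Continuous A.p) (u : ℝ →ᵇ ℝ) : Continuous (A.qfun u) := by
  refine Continuous.mul (Real.continuous_exp.comp A.D_cont) ?_
  exact hpc.mul (S.hgl.continuous.comp (u.continuous.comp (continuous_id.sub continuous_const)))

/-- When coefficients are continuous, the fixed point solves the delayed ODE. -/
lemma sol_hasDerivAt (hδc : Continuous A.δ) (hpc : Continuous A.p) (t : ℝ) :
    HasDerivAt (fun s => A.sol s)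
      (-A.δ t * A.sol t + A.p t * S.g (A.sol (t - S.τ))) t := by
  set u := A.sol with hu
  set c₀ : ℝ := ∫ s in Set.Iic (0:ℝ), A.qfun u s with hc₀
  set F : ℝ → ℝ := fun t => c₀ + ∫ s in (0:ℝ)..t, A.qfun u s with hF
  have hFd : HasDerivAt F (A.qfun u t) t := by
    refine HasDerivAt.const_add c₀ ?_
    exact intervalIntegral.integral_hasDerivAt_right (A.qfun_ii u 0 t)
      ((A.qfun_continuous hpc u).aestronglyMeasurable.stronglyMeasurableAtFilter)
      (A.qfun_continuous hpc u).continuousAt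
  have hEd : HasDerivAt (fun s => Real.exp (-(A.D s)))
      (-A.δ t * Real.exp (-(A.D t))) t := by
    have := ((A.D_hasDerivAt hδc t).neg).exp
    simpa [mul_comm] using this
  have hprod : HasDerivAt (fun s => Real.exp (-(A.D s)) * F s)
      (-A.δ t * Real.exp (-(A.D t)) * F t + Real.exp (-(A.D t)) * A.qfun u t) t :=
    hEd.mul hFd
  have heq : ∀ s, Real.exp (-(A.D s)) * F s = A.sol s := by
    intro s
    have := A.PhiFun_eq u s
    have h2 : A.sol s = A.PhiFun u s := by
      conv_lhs => rw [← A.sol_fixed]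
      rfl
    rw [h2, this]
  have hder2 : HasDerivAt (fun s => A.sol s)
      (-A.δ t * Real.exp (-(A.D t)) * F t + Real.exp (-(A.D t)) * A.qfun u t) t := by
    refine HasDerivAt.congr_of_eventuallyEq hprod ?_
    exact Eventually.of_forall fun s => (heq s).symm
  have hval : -A.δ t * Real.exp (-(A.D t)) * F t + Real.exp (-(A.D t)) * A.qfun u t =
      -A.δ t * A.sol t + A.p t * S.g (A.sol (t - S.τ)) := by
    have h1 : Real.exp (-(A.D t)) * F t = A.sol t := heq t
    have h2 : Real.exp (-(A.D t)) * A.qfun u t = A.p t * S.g (A.sol (t - S.τ)) := by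
      rw [qfun, ← mul_assoc, ← Real.exp_add]
      simp [hu]
    rw [mul_assoc, h1, h2]
  rwa [hval] at hder2

/-- A bounded solution of the delayed ODE is a fixed point of the operator. -/
lemma eq_sol_of_ode (y : ℝ → ℝ) (C : ℝ)
    (hyb : ∀ t, |y t| ≤ C)
    (hyd : ∀ t, HasDerivAt y (-A.δ t * y t + A.p t * S.g (y (t - S.τ))) t)
    (hδc : Continuous A.δ) : ∀ t, y t = A.sol t := by
  have hyc : Continuous y := by
    rw [continuous_iff_continuousAt]
    exact fun t => (hyd t).continuousAt
  have hC0 : 0 ≤ C := le_trans (abs_nonneg _) (hyb 0)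
  set yB : ℝ →ᵇ ℝ := BoundedContinuousFunction.ofNormedAddCommGroup y hyc C
    (fun t => by rw [Real.norm_eq_abs]; exact hyb t) with hyB
  have hyBc : ∀ t, yB t = y t := fun t => rfl
  -- Z has derivative qfun yB
  set Z : ℝ → ℝ := fun s => y s * Real.exp (A.D s) with hZdef
  have hZd : ∀ s, HasDerivAt Z (A.qfun yB s) s := by
    intro s
    have hD : HasDerivAt (fun r => Real.exp (A.D r)) (A.δ s * Real.exp (A.D s)) s := by
      have := (A.D_hasDerivAt hδc s).exp
      simpa [mul_comm] using this
    have := (hyd s).mul hD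
    have harith : (-A.δ s * y s + A.p s * S.g (y (s - S.τ))) * Real.exp (A.D s) +
        y s * (A.δ s * Real.exp (A.D s)) = A.qfun yB s := by
      rw [qfun]
      have : (yB (s - S.τ) : ℝ) = y (s - S.τ) := rfl
      rw [this]
      ring
    rwa [harith] at this
  -- FTC on [r, t]
  have hW : ∀ r t : ℝ, Z t - (∫ s in Set.Iic t, A.qfun yB s) =
      Z r - ∫ s in Set.Iic r, A.qfun yB s := by
    intro r t
    have hftc : ∫ s in r..t, A.qfun yB s = Z t - Z r :=
      intervalIntegral.integral_eq_sub_of_hasDerivAt (fun s _ => hZd s) (A.qfun_ii yB r t)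
    have hsub : (∫ s in Set.Iic t, A.qfun yB s) - (∫ s in Set.Iic r, A.qfun yB s) =
        ∫ s in r..t, A.qfun yB s :=
      intervalIntegral.integral_Iic_sub_Iic (A.qfun_integrableOn_Iic yB r)
        (A.qfun_integrableOn_Iic yB t)
    have := hsub.trans hftc
    linarith
  -- estimate and limit
  have hker : ∀ r t : ℝ, r ≤ t → |Z r - ∫ s in Set.Iic r, A.qfun yB s| ≤
      Real.exp (A.D t) * Real.exp S.b * (C + S.K * S.Cg yB) * Real.exp (S.a * (r - t)) := by
    intro r t hrt
    have h1 : |Z r| ≤ C * Real.exp (A.D r) := by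
      rw [hZdef, abs_mul, abs_of_nonneg (Real.exp_pos _).le]
      exact mul_le_mul_of_nonneg_right (hyb r) (Real.exp_pos _).le
    have h2 : |∫ s in Set.Iic r, A.qfun yB s| ≤ Real.exp (A.D r) * (S.K * S.Cg yB) := by
      rw [A.qfun_int_eq yB r, abs_mul, abs_of_nonneg (Real.exp_pos _).le]
      exact mul_le_mul_of_nonneg_left (A.PhiFun_abs_le yB r) (Real.exp_pos _).le
    have h3 : Real.exp (A.D r) ≤ Real.exp (A.D t) * Real.exp S.b * Real.exp (S.a * (r - t)) := by
      have := A.ker_le (s := r) (t := t) hrt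
      calc Real.exp (A.D r) = Real.exp (A.D t) * Real.exp (A.D r - A.D t) := by
            rw [← Real.exp_add]; ring_nf
        _ ≤ Real.exp (A.D t) * (Real.exp S.b * Real.exp (S.a * (r - t))) :=
            mul_le_mul_of_nonneg_left this (Real.exp_pos _).le
        _ = Real.exp (A.D t) * Real.exp S.b * Real.exp (S.a * (r - t)) := by ring
    calc |Z r - ∫ s in Set.Iic r, A.qfun yB s| ≤ |Z r| + |∫ s in Set.Iic r, A.qfun yB s| :=
          abs_sub _ _
      _ ≤ C * Real.exp (A.D r) + Real.exp (A.D r) * (S.K * S.Cg yB) := add_le_add h1 h2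
      _ = Real.exp (A.D r) * (C + S.K * S.Cg yB) := by ring
      _ ≤ Real.exp (A.D t) * Real.exp S.b * Real.exp (S.a * (r - t)) * (C + S.K * S.Cg yB) := by
          refine mul_le_mul_of_nonneg_right h3 ?_
          have := mul_nonneg S.K_nonneg (S.Cg_nonneg yB)
          linarith
      _ = Real.exp (A.D t) * Real.exp S.b * (C + S.K * S.Cg yB) * Real.exp (S.a * (r - t)) := by
          ring
  have hZero : ∀ t : ℝ, Z t = ∫ s in Set.Iic t, A.qfun yB s := by
    intro t
    set W := Z t - ∫ s in Set.Iic t, A.qfun yB s with hWdef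
    have hbnd : ∀ n : ℕ, |W| ≤
        (Real.exp (A.D t) * Real.exp S.b * (C + S.K * S.Cg yB)) * Real.exp (-(S.a * n)) := by
      intro n
      have h := hW (t - n) t
      have h2 := hker (t - n) t (by linarith [Nat.cast_nonneg (α := ℝ) n])
      rw [hWdef, h]
      have : S.a * ((t - n) - t) = -(S.a * n) := by ring
      rw [← this]
      exact h2
    have htend : Tendsto (fun n : ℕ =>
        (Real.exp (A.D t) * Real.exp S.b * (C + S.K * S.Cg yB)) * Real.exp (-(S.a * n)))
        atTop (𝓝 0) := by
      have h1 : Tendsto (fun n : ℕ => S.a * (n : ℝ)) atTop atTop :=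
        Tendsto.const_mul_atTop S.ha tendsto_natCast_atTop_atTop
      have h2 : Tendsto (fun n : ℕ => -(S.a * (n : ℝ))) atTop atBot :=
        tendsto_neg_atBot_iff.2 h1
      have h3 := Real.tendsto_exp_atBot.comp h2
      have := h3.const_mul (Real.exp (A.D t) * Real.exp S.b * (C + S.K * S.Cg yB))
      simpa using this
    have : |W| ≤ 0 := ge_of_tendsto' htend hbnd
    have := abs_nonneg W
    have hW0 : W = 0 := abs_eq_zero.1 (le_antisymm ‹|W| ≤ 0› (abs_nonneg W))
    rw [hWdef] at hW0
    linarith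
  -- conclude y = sol
  have hfix : A.Phi yB = yB := by
    ext t
    have h1 : A.Phi yB t = A.PhiFun yB t := rfl
    have h2 : Real.exp (A.D t) * A.PhiFun yB t = Z t := (A.qfun_int_eq yB t).symm.trans (hZero t).symm
    have h3 : A.PhiFun yB t = y t := by
      have hexp : Real.exp (A.D t) ≠ 0 := (Real.exp_pos _).ne'
      have : Real.exp (A.D t) * A.PhiFun yB t = Real.exp (A.D t) * y t := by
        rw [h2, hZdef]
        ring
      exact mul_left_cancel₀ hexp this
    rw [h1, h3]
    rfl
  intro t
  have := A.eq_sol_of_fixed hfix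
  calc y t = yB t := rfl
    _ = A.sol t := by rw [this]

end Adm

namespace Adm

variable {S : AASetup} (A : Adm S)

/-- Translate an admissible pair. -/
def shift (c : ℝ) : Adm S where
  δ := fun t => A.δ (t + c)
  p := fun t => A.p (t + c)
  δm := A.δm.comp (measurable_id.add_const c)
  pm := A.pm.comp (measurable_id.add_const c)
  δ0 := fun t => A.δ0 (t + c)
  p0 := fun t => A.p0 (t + c)
  δle := fun t => A.δle (t + c)
  ple := fun t => A.ple (t + c)
  ilb := fun s t h => by
    have hcv : (∫ u in s..t, A.δ (u + c)) = ∫ u in s + c..t + c, A.δ u :=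
      intervalIntegral.integral_comp_add_right _ c
    rw [hcv]
    have := A.ilb (s + c) (t + c) (by linarith)
    have harith : t + c - (s + c) = t - s := by ring
    rwa [harith] at this

lemma shift_D_sub (c s t : ℝ) :
    (A.shift c).D s - (A.shift c).D t = A.D (s + c) - A.D (t + c) := by
  rw [(A.shift c).D_sub t s, A.D_sub (t + c) (s + c)]
  exact intervalIntegral.integral_comp_add_right _ c

lemma sol_shift (c : ℝ) (t : ℝ) : (A.shift c).sol t = A.sol (t + c) := by
  set w : ℝ →ᵇ ℝ :=
    A.sol.compContinuous ⟨fun t => t + c, continuous_id.add continuous_const⟩ with hw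
  have hwc : ∀ x, w x = A.sol (x + c) := fun x => rfl
  have hfix : (A.shift c).Phi w = w := by
    ext t
    rw [(A.shift c).Phi_apply w t]
    have hinteg : ∀ s, (A.shift c).integrand w t s = A.integrand A.sol (t + c) (s + c) := by
      intro s
      rw [integrand, integrand, A.shift_D_sub c s t]
      have h1 : w (s - S.τ) = A.sol (s + c - S.τ) := by
        rw [hwc (s - S.τ)]
        congr 1
        ring
      have h2 : (A.shift c).p s = A.p (s + c) := rfl
      rw [h1, h2]
    have h3 : (∫ s in Set.Iic t, (A.shift c).integrand w t s) =
        ∫ s in Set.Iic t, A.integrand A.sol (t + c) (s + c) := by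
      exact setIntegral_congr_fun measurableSet_Iic fun s _ => hinteg s
    rw [h3, integral_Iic_comp_add_right (fun s => A.integrand A.sol (t + c) s) t c]
    have h4 : (∫ s in Set.Iic (t + c), A.integrand A.sol (t + c) s) = A.sol (t + c) :=
      (A.sol_eq (t + c)).symm
    rw [h4, hwc t]
  have := (A.shift c).eq_sol_of_fixed hfix
  rw [← this]
  exact (hwc t).symm

end Adm

namespace AAPrelim

lemma expShiftIntegrableOn (a t : ℝ) (ha : 0 < a) :
    IntegrableOn (fun s => Real.exp (a * (s - t))) (Set.Iic t) := by
  have h := (expIntegrableIic a t ha).const_mul (Real.exp (-(a * t)))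
  refine IntegrableOn.congr_fun h (fun s _ => ?_) measurableSet_Iic
  rw [← Real.exp_add]
  congr 1
  ring

lemma expShiftIntegral (a t : ℝ) (ha : 0 < a) :
    ∫ s in Set.Iic t, Real.exp (a * (s - t)) = 1 / a := by
  have h : ∀ s : ℝ, Real.exp (a * (s - t)) = Real.exp (-(a * t)) * Real.exp (a * s) := by
    intro s
    rw [← Real.exp_add]
    congr 1
    ring
  rw [setIntegral_congr_fun measurableSet_Iic fun s _ => h s,
    MeasureTheory.integral_const_mul, expIntegralIic a t ha]
  have h2 : Real.exp (-(a * t)) * (Real.exp (a * t) / a) =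
      (Real.exp (-(a * t)) * Real.exp (a * t)) / a := by ring
  rw [h2, ← Real.exp_add]
  simp

lemma integrableOn_of_exp_bound (a t : ℝ) (ha : 0 < a) (f : ℝ → ℝ)
    (hm : AEStronglyMeasurable f (volume.restrict (Set.Iic t))) (C : ℝ)
    (hb : ∀ s ≤ t, |f s| ≤ C * Real.exp (a * (s - t))) :
    IntegrableOn f (Set.Iic t) := by
  refine Integrable.mono' ((expShiftIntegrableOn a t ha).const_mul C) hm ?_
  rw [ae_restrict_iff' measurableSet_Iic]
  exact Eventually.of_forall fun s hs => hb s hs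

end AAPrelim

namespace Adm

variable {S : AASetup} (A : Adm S)

/-- kernel times `p`. -/
def kerp (t s : ℝ) : ℝ := Real.exp (A.D s - A.D t) * A.p s

lemma kerp_nonneg (t s : ℝ) : 0 ≤ A.kerp t s :=
  mul_nonneg (Real.exp_pos _).le (A.p0 s)

lemma kerp_le {t s : ℝ} (h : s ≤ t) :
    A.kerp t s ≤ (Real.exp S.b * S.Bp) * Real.exp (S.a * (s - t)) := by
  rw [kerp]
  calc Real.exp (A.D s - A.D t) * A.p s
      ≤ (Real.exp S.b * Real.exp (S.a * (s - t))) * S.Bp :=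
        mul_le_mul (A.ker_le h) (A.ple s) (A.p0 s)
          (mul_nonneg (Real.exp_pos _).le (Real.exp_pos _).le)
    _ = (Real.exp S.b * S.Bp) * Real.exp (S.a * (s - t)) := by ring

lemma kerp_meas (t : ℝ) : Measurable (fun s => A.kerp t s) :=
  ((Real.continuous_exp.comp ((A.D_cont).sub continuous_const)).measurable).mul A.pm

lemma integrand_eq_kerp (u : ℝ →ᵇ ℝ) (t s : ℝ) :
    A.integrand u t s = A.kerp t s * S.g (u (s - S.τ)) := by
  rw [integrand, kerp]
  ring

lemma kerp_tendsto (AN : ℕ → Adm S) (AL : Adm S)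
    (hδ : ∀ x, Tendsto (fun n => (AN n).δ x) atTop (𝓝 (AL.δ x)))
    (hp : ∀ x, Tendsto (fun n => (AN n).p x) atTop (𝓝 (AL.p x))) (t s : ℝ) :
    Tendsto (fun n => (AN n).kerp t s) atTop (𝓝 (AL.kerp t s)) := by
  have hD : ∀ x : ℝ, Tendsto (fun n => (AN n).D x) atTop (𝓝 (AL.D x)) := by
    intro x
    refine intervalIntegral.tendsto_integral_filter_of_dominated_convergence
      (fun _ => S.Bd) ?_ ?_ ?_ ?_
    · exact Eventually.of_forall fun n => ((AN n).δm.aestronglyMeasurable).restrict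
    · refine Eventually.of_forall fun n => (ae_of_all _ fun z _ => ?_)
      rw [Real.norm_eq_abs, abs_of_nonneg ((AN n).δ0 z)]
      exact (AN n).δle z
    · exact intervalIntegrable_const
    · exact ae_of_all _ fun z _ => hδ z
  exact ((Real.continuous_exp.tendsto _).comp ((hD s).sub (hD t))).mul (hp s)

end Adm

namespace Adm

variable {S : AASetup}

lemma sol_tendsto (AN : ℕ → Adm S) (AL : Adm S)
    (hδ : ∀ x, Tendsto (fun n => (AN n).δ x) atTop (𝓝 (AL.δ x)))
    (hp : ∀ x, Tendsto (fun n => (AN n).p x) atTop (𝓝 (AL.p x))) (t : ℝ) :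
    Tendsto (fun n => (AN n).sol t) atTop (𝓝 (AL.sol t)) := by
  classical
  set R : ℝ := 2 * S.K * S.g 0 with hRdef
  have hR0 : 0 ≤ R := by
    have := mul_nonneg (mul_nonneg (by norm_num : (0:ℝ) ≤ 2) S.K_nonneg) (S.hg0 0)
    simpa [hRdef] using this
  set Δ : ℕ → ℝ → ℝ := fun n x => |(AN n).sol x - AL.sol x| with hΔdef
  have hΔ0 : ∀ n x, 0 ≤ Δ n x := fun n x => abs_nonneg _
  have hΔle : ∀ n x, Δ n x ≤ 2 * R := by
    intro n x
    have h1 := (AN n).sol_abs_le x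
    have h2 := AL.sol_abs_le x
    calc Δ n x ≤ |(AN n).sol x| + |AL.sol x| := abs_sub _ _
      _ ≤ 2 * R := by rw [hRdef]; linarith
  have hΔcont : ∀ n, Continuous (fun x => Δ n x) :=
    fun n => (((AN n).sol.continuous).sub (AL.sol.continuous)).abs
  set CgL : ℝ := S.Cg AL.sol with hCgLdef
  have hCgL0 : 0 ≤ CgL := S.Cg_nonneg _
  have hgL : ∀ z, 0 ≤ S.g (AL.sol z) ∧ S.g (AL.sol z) ≤ CgL := fun z =>
    ⟨S.hg0 _, (le_abs_self _).trans (S.abs_g_comp_le AL.sol z)⟩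
  set E : ℕ → ℝ → ℝ := fun n x =>
    ∫ s in Set.Iic x, |(AN n).kerp x s - AL.kerp x s| * S.g (AL.sol (s - S.τ)) with hEdef
  -- integrability of the comparison integrands
  have hB1int : ∀ n x, IntegrableOn
      (fun s => (AN n).kerp x s * ((S.γ : ℝ) * Δ n (s - S.τ))) (Set.Iic x) := by
    intro n x
    refine AAPrelim.integrableOn_of_exp_bound S.a x S.ha _
      ((((AN n).kerp_meas x).mul (measurable_const.mul
        ((hΔcont n).comp (continuous_id.sub continuous_const)).measurable)).aestronglyMeasurable.restrict)
      (Real.exp S.b * S.Bp * ((S.γ : ℝ) * (2 * R))) ?_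
    intro s hs
    have hk := (AN n).kerp_le (t := x) (s := s) hs
    have hγΔ : (S.γ : ℝ) * Δ n (s - S.τ) ≤ (S.γ : ℝ) * (2 * R) :=
      mul_le_mul_of_nonneg_left (hΔle n _) S.γ.coe_nonneg
    have hγΔ0 : 0 ≤ (S.γ : ℝ) * Δ n (s - S.τ) := mul_nonneg S.γ.coe_nonneg (hΔ0 n _)
    rw [abs_of_nonneg (mul_nonneg ((AN n).kerp_nonneg x s) hγΔ0)]
    calc (AN n).kerp x s * ((S.γ : ℝ) * Δ n (s - S.τ))
        ≤ ((Real.exp S.b * S.Bp) * Real.exp (S.a * (s - x))) * ((S.γ : ℝ) * (2 * R)) :=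
          mul_le_mul hk hγΔ hγΔ0 (mul_nonneg
            (mul_nonneg (Real.exp_pos _).le S.hBp.le) (Real.exp_pos _).le)
      _ = Real.exp S.b * S.Bp * ((S.γ : ℝ) * (2 * R)) * Real.exp (S.a * (s - x)) := by ring
  have hB2int : ∀ n x, IntegrableOn
      (fun s => |(AN n).kerp x s - AL.kerp x s| * S.g (AL.sol (s - S.τ))) (Set.Iic x) := by
    intro n x
    refine AAPrelim.integrableOn_of_exp_bound S.a x S.ha _
      (((((AN n).kerp_meas x).sub (AL.kerp_meas x)).abs.mul
        ((S.hgl.continuous.comp ((AL.sol.continuous).comp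
          (continuous_id.sub continuous_const))).measurable)).aestronglyMeasurable.restrict)
      (2 * (Real.exp S.b * S.Bp) * CgL) ?_
    intro s hs
    have hk1 := (AN n).kerp_le (t := x) (s := s) hs
    have hk2 := AL.kerp_le (t := x) (s := s) hs
    have habs : |(AN n).kerp x s - AL.kerp x s| ≤
        2 * (Real.exp S.b * S.Bp) * Real.exp (S.a * (s - x)) := by
      have := abs_sub ((AN n).kerp x s) (AL.kerp x s)
      rw [abs_of_nonneg ((AN n).kerp_nonneg x s), abs_of_nonneg (AL.kerp_nonneg x s)] at this
      nlinarith
    have h2 := (hgL (s - S.τ))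
    rw [abs_of_nonneg (mul_nonneg (abs_nonneg _) h2.1)]
    calc |(AN n).kerp x s - AL.kerp x s| * S.g (AL.sol (s - S.τ))
        ≤ (2 * (Real.exp S.b * S.Bp) * Real.exp (S.a * (s - x))) * CgL :=
          mul_le_mul habs h2.2 h2.1 (mul_nonneg (mul_nonneg (by norm_num)
            (mul_nonneg (Real.exp_pos _).le S.hBp.le)) (Real.exp_pos _).le)
      _ = 2 * (Real.exp S.b * S.Bp) * CgL * Real.exp (S.a * (s - x)) := by ring
  -- key real inequality
  have keyineq : ∀ n x, Δ n x ≤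
      (∫ s in Set.Iic x, (AN n).kerp x s * ((S.γ : ℝ) * Δ n (s - S.τ))) + E n x := by
    intro n x
    have h1 := (AN n).integrand_integrableOn (AN n).sol x
    have h2 := AL.integrand_integrableOn AL.sol x
    have hΔeq : Δ n x = |∫ s in Set.Iic x,
        ((AN n).integrand (AN n).sol x s - AL.integrand AL.sol x s)| := by
      rw [hΔdef]
      simp only
      rw [(AN n).sol_eq x, AL.sol_eq x, integral_sub h1 h2]
    rw [hΔeq]
    have habs : |∫ s in Set.Iic x,
        ((AN n).integrand (AN n).sol x s - AL.integrand AL.sol x s)| ≤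
        ∫ s in Set.Iic x, |(AN n).integrand (AN n).sol x s - AL.integrand AL.sol x s| := by
      have h := MeasureTheory.norm_integral_le_integral_norm
        (f := fun s => (AN n).integrand (AN n).sol x s - AL.integrand AL.sol x s)
        (μ := volume.restrict (Set.Iic x))
      simpa [Real.norm_eq_abs] using h
    refine habs.trans ?_
    have hmono : ∫ s in Set.Iic x,
        |(AN n).integrand (AN n).sol x s - AL.integrand AL.sol x s| ≤
        ∫ s in Set.Iic x, ((AN n).kerp x s * ((S.γ : ℝ) * Δ n (s - S.τ)) +
          |(AN n).kerp x s - AL.kerp x s| * S.g (AL.sol (s - S.τ))) := by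
      refine setIntegral_mono_on ((h1.sub h2).abs) ((hB1int n x).add (hB2int n x))
        measurableSet_Iic ?_
      intro s _
      rw [(AN n).integrand_eq_kerp (AN n).sol x s, AL.integrand_eq_kerp AL.sol x s]
      set k1 := (AN n).kerp x s
      set k2 := AL.kerp x s
      set g1 := S.g ((AN n).sol (s - S.τ))
      set g2 := S.g (AL.sol (s - S.τ))
      have hsplit : k1 * g1 - k2 * g2 = k1 * (g1 - g2) + (k1 - k2) * g2 := by ring
      have hg12 : |g1 - g2| ≤ (S.γ : ℝ) * Δ n (s - S.τ) := by
        have := S.hgl.dist_le_mul ((AN n).sol (s - S.τ)) (AL.sol (s - S.τ))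
        rw [Real.dist_eq, Real.dist_eq] at this
        exact this
      calc |k1 * g1 - k2 * g2| = |k1 * (g1 - g2) + (k1 - k2) * g2| := by rw [hsplit]
        _ ≤ |k1 * (g1 - g2)| + |(k1 - k2) * g2| := abs_add_le _ _
        _ = k1 * |g1 - g2| + |k1 - k2| * g2 := by
            rw [abs_mul, abs_mul, abs_of_nonneg ((AN n).kerp_nonneg x s),
              abs_of_nonneg (hgL (s - S.τ)).1]
        _ ≤ k1 * ((S.γ : ℝ) * Δ n (s - S.τ)) + |k1 - k2| * g2 := by
            have := mul_le_mul_of_nonneg_left hg12 ((AN n).kerp_nonneg x s)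
            linarith
    refine hmono.trans ?_
    rw [integral_add (hB1int n x) (hB2int n x)]
  -- E tends to zero
  have hE0 : ∀ x, Tendsto (fun n => E n x) atTop (𝓝 0) := by
    intro x
    have h := MeasureTheory.tendsto_integral_filter_of_dominated_convergence
      (μ := volume.restrict (Set.Iic x)) (l := (atTop : Filter ℕ))
      (F := fun n s => |(AN n).kerp x s - AL.kerp x s| * S.g (AL.sol (s - S.τ)))
      (f := fun _ => (0:ℝ))
      (bound := fun s => 2 * (Real.exp S.b * S.Bp) * CgL * Real.exp (S.a * (s - x)))
      ?_ ?_ ?_ ?_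
    · simpa using h
    · refine Eventually.of_forall fun n => ?_
      exact (((((AN n).kerp_meas x).sub (AL.kerp_meas x)).abs.mul
        ((S.hgl.continuous.comp ((AL.sol.continuous).comp
          (continuous_id.sub continuous_const))).measurable)).aestronglyMeasurable.restrict)
    · refine Eventually.of_forall fun n => ?_
      rw [ae_restrict_iff' measurableSet_Iic]
      refine Eventually.of_forall fun s hs => ?_
      have hk1 := (AN n).kerp_le (t := x) (s := s) hs
      have hk2 := AL.kerp_le (t := x) (s := s) hs
      have habs : |(AN n).kerp x s - AL.kerp x s| ≤
          2 * (Real.exp S.b * S.Bp) * Real.exp (S.a * (s - x)) := by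
        have := abs_sub ((AN n).kerp x s) (AL.kerp x s)
        rw [abs_of_nonneg ((AN n).kerp_nonneg x s), abs_of_nonneg (AL.kerp_nonneg x s)] at this
        nlinarith
      have h2 := hgL (s - S.τ)
      rw [Real.norm_eq_abs, abs_of_nonneg (mul_nonneg (abs_nonneg _) h2.1)]
      calc |(AN n).kerp x s - AL.kerp x s| * S.g (AL.sol (s - S.τ))
          ≤ (2 * (Real.exp S.b * S.Bp) * Real.exp (S.a * (s - x))) * CgL :=
            mul_le_mul habs h2.2 h2.1 (mul_nonneg (mul_nonneg (by norm_num)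
              (mul_nonneg (Real.exp_pos _).le S.hBp.le)) (Real.exp_pos _).le)
        _ = 2 * (Real.exp S.b * S.Bp) * CgL * Real.exp (S.a * (s - x)) := by ring
    · exact (AAPrelim.expShiftIntegrableOn S.a x S.ha).const_mul _
    · refine ae_of_all _ fun s => ?_
      have hker := kerp_tendsto AN AL hδ hp x s
      have : Tendsto (fun n => |(AN n).kerp x s - AL.kerp x s|) atTop (𝓝 0) := by
        have h1 : Tendsto (fun n => (AN n).kerp x s - AL.kerp x s) atTop (𝓝 0) := by
          simpa using hker.sub (tendsto_const_nhds (x := AL.kerp x s))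
        simpa using h1.abs
      simpa using this.mul_const (S.g (AL.sol (s - S.τ)))
  -- pass to ℝ≥0∞
  set α : ℝ → ℝ≥0∞ := fun x => Filter.limsup (fun n => ENNReal.ofReal (Δ n x)) atTop with hαdef
  set Sa : ℝ≥0∞ := ⨆ x : ℝ, α x with hSadef
  have hαle : ∀ x, α x ≤ ENNReal.ofReal (2 * R) := by
    intro x
    refine limsup_le_of_le (h := Eventually.of_forall fun n => ?_)
    exact ENNReal.ofReal_le_ofReal (hΔle n x)
  have hSatop : Sa ≠ ∞ := ((iSup_le hαle).trans_lt ENNReal.ofReal_lt_top).ne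
  have hγK : (S.γ : ℝ) * S.K ≤ 1/2 := by
    have := S.hγ; rw [AASetup.K]; linarith
  -- the main estimate on α
  have hkey : ∀ x, α x ≤ ENNReal.ofReal ((S.γ : ℝ) * S.K) * Sa := by
    intro x
    have step1 : ∀ n, ENNReal.ofReal (Δ n x) ≤
        (∫⁻ s in Set.Iic x, ENNReal.ofReal ((AN n).kerp x s * ((S.γ : ℝ) * Δ n (s - S.τ)))) +
        ENNReal.ofReal (E n x) := by
      intro n
      have hfn : 0 ≤ ∫ s in Set.Iic x, (AN n).kerp x s * ((S.γ : ℝ) * Δ n (s - S.τ)) :=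
        setIntegral_nonneg measurableSet_Iic fun s _ =>
          mul_nonneg ((AN n).kerp_nonneg x s) (mul_nonneg S.γ.coe_nonneg (hΔ0 n _))
      have h := ENNReal.ofReal_le_ofReal (keyineq n x)
      rw [ENNReal.ofReal_add hfn (by
        exact setIntegral_nonneg measurableSet_Iic fun s _ =>
          mul_nonneg (abs_nonneg _) (hgL (s - S.τ)).1)] at h
      rwa [MeasureTheory.ofReal_integral_eq_lintegral_ofReal (hB1int n x)
        (ae_of_all _ fun s =>
          mul_nonneg ((AN n).kerp_nonneg x s) (mul_nonneg S.γ.coe_nonneg (hΔ0 n _)))] at h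
    have step2 : α x ≤ Filter.limsup (fun n =>
        ∫⁻ s in Set.Iic x, ENNReal.ofReal ((AN n).kerp x s * ((S.γ : ℝ) * Δ n (s - S.τ))))
        atTop := by
      have hEten : Tendsto (fun n => ENNReal.ofReal (E n x)) atTop (𝓝 0) := by
        have := ENNReal.tendsto_ofReal (hE0 x)
        simpa using this
      refine le_trans (limsup_le_limsup (Eventually.of_forall step1)) ?_
      exact AAPrelim.ennreal_limsup_add_tendsto_zero hEten
    -- reverse Fatou
    have hmeasn : ∀ n, Measurable (fun s =>
        ENNReal.ofReal ((AN n).kerp x s * ((S.γ : ℝ) * Δ n (s - S.τ)))) := by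
      intro n
      exact ENNReal.measurable_ofReal.comp (((AN n).kerp_meas x).mul
        (measurable_const.mul ((hΔcont n).comp (continuous_id.sub continuous_const)).measurable))
    have step3 : Filter.limsup (fun n =>
        ∫⁻ s in Set.Iic x, ENNReal.ofReal ((AN n).kerp x s * ((S.γ : ℝ) * Δ n (s - S.τ))))
        atTop ≤ ∫⁻ s in Set.Iic x, Filter.limsup (fun n =>
          ENNReal.ofReal ((AN n).kerp x s * ((S.γ : ℝ) * Δ n (s - S.τ)))) atTop := by
      refine MeasureTheory.limsup_lintegral_le
        (g := fun s => ENNReal.ofReal ((Real.exp S.b * S.Bp * ((S.γ : ℝ) * (2 * R))) *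
          Real.exp (S.a * (s - x)))) (fun n => hmeasn n) ?_ ?_
      · intro n
        rw [Filter.EventuallyLE, ae_restrict_iff' measurableSet_Iic]
        refine Eventually.of_forall fun s hs => ?_
        refine ENNReal.ofReal_le_ofReal ?_
        have hk := (AN n).kerp_le (t := x) (s := s) hs
        have hγΔ : (S.γ : ℝ) * Δ n (s - S.τ) ≤ (S.γ : ℝ) * (2 * R) :=
          mul_le_mul_of_nonneg_left (hΔle n _) S.γ.coe_nonneg
        calc (AN n).kerp x s * ((S.γ : ℝ) * Δ n (s - S.τ))
            ≤ ((Real.exp S.b * S.Bp) * Real.exp (S.a * (s - x))) * ((S.γ : ℝ) * (2 * R)) :=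
              mul_le_mul hk hγΔ (mul_nonneg S.γ.coe_nonneg (hΔ0 n _))
                (mul_nonneg (mul_nonneg (Real.exp_pos _).le S.hBp.le) (Real.exp_pos _).le)
          _ = (Real.exp S.b * S.Bp * ((S.γ : ℝ) * (2 * R))) * Real.exp (S.a * (s - x)) := by
              ring
      · have hint : Integrable (fun s => (Real.exp S.b * S.Bp * ((S.γ : ℝ) * (2 * R))) *
            Real.exp (S.a * (s - x))) (volume.restrict (Set.Iic x)) :=
          (AAPrelim.expShiftIntegrableOn S.a x S.ha).const_mul _
        rw [← MeasureTheory.ofReal_integral_eq_lintegral_ofReal hint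
          (ae_of_all _ fun s => mul_nonneg (mul_nonneg (mul_nonneg (Real.exp_pos _).le S.hBp.le)
            (mul_nonneg S.γ.coe_nonneg (by linarith))) (Real.exp_pos _).le)]
        exact ENNReal.ofReal_ne_top
    -- pointwise limsup bound
    have step4 : ∀ s, Filter.limsup (fun n =>
        ENNReal.ofReal ((AN n).kerp x s * ((S.γ : ℝ) * Δ n (s - S.τ)))) atTop ≤
        ENNReal.ofReal (AL.kerp x s * (S.γ : ℝ)) * α (s - S.τ) := by
      intro s
      have hre : ∀ n, (AN n).kerp x s * ((S.γ : ℝ) * Δ n (s - S.τ)) =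
          ((AN n).kerp x s * (S.γ : ℝ)) * Δ n (s - S.τ) := fun n => by ring
      have hsplit : ∀ n, ENNReal.ofReal ((AN n).kerp x s * ((S.γ : ℝ) * Δ n (s - S.τ))) =
          ENNReal.ofReal ((AN n).kerp x s * (S.γ : ℝ)) * ENNReal.ofReal (Δ n (s - S.τ)) := by
        intro n
        rw [hre n, ENNReal.ofReal_mul (mul_nonneg ((AN n).kerp_nonneg x s) S.γ.coe_nonneg)]
      set u : ℕ → ℝ≥0∞ := fun n => ENNReal.ofReal ((AN n).kerp x s * (S.γ : ℝ)) with hudef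
      set v : ℕ → ℝ≥0∞ := fun n => ENNReal.ofReal (Δ n (s - S.τ)) with hvdef
      have hu : Tendsto u atTop (𝓝 (ENNReal.ofReal (AL.kerp x s * (S.γ : ℝ)))) := by
        exact ENNReal.tendsto_ofReal ((kerp_tendsto AN AL hδ hp x s).mul_const _)
      have huls : Filter.limsup u atTop = ENNReal.ofReal (AL.kerp x s * (S.γ : ℝ)) :=
        hu.limsup_eq
      have hvtop : Filter.limsup v atTop ≠ ∞ := by
        have : Filter.limsup v atTop ≤ ENNReal.ofReal (2 * R) := by
          refine limsup_le_of_le (h := Eventually.of_forall fun n => ?_)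
          exact ENNReal.ofReal_le_ofReal (hΔle n _)
        exact (this.trans_lt ENNReal.ofReal_lt_top).ne
      have hmul := ENNReal.limsup_mul_le' (f := atTop) (u := u) (v := v)
        (Or.inr hvtop) (Or.inl (huls ▸ ENNReal.ofReal_ne_top))
      calc Filter.limsup (fun n =>
            ENNReal.ofReal ((AN n).kerp x s * ((S.γ : ℝ) * Δ n (s - S.τ)))) atTop
          = Filter.limsup (u * v) atTop := by
            congr 1
            funext n
            rw [hsplit n]
            rfl
        _ ≤ Filter.limsup u atTop * Filter.limsup v atTop := hmul
        _ = ENNReal.ofReal (AL.kerp x s * (S.γ : ℝ)) * α (s - S.τ) := by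
            rw [huls, hαdef]
    have step5 : (∫⁻ s in Set.Iic x, Filter.limsup (fun n =>
          ENNReal.ofReal ((AN n).kerp x s * ((S.γ : ℝ) * Δ n (s - S.τ)))) atTop) ≤
        ∫⁻ s in Set.Iic x, ENNReal.ofReal ((Real.exp S.b * S.Bp * (S.γ : ℝ)) *
          Real.exp (S.a * (s - x))) * Sa := by
      refine lintegral_mono_ae ?_
      rw [ae_restrict_iff' measurableSet_Iic]
      refine Eventually.of_forall fun s hs => ?_
      refine (step4 s).trans ?_
      refine mul_le_mul' (ENNReal.ofReal_le_ofReal ?_) (le_iSup α (s - S.τ))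
      have hk := AL.kerp_le (t := x) (s := s) hs
      calc AL.kerp x s * (S.γ : ℝ)
          ≤ ((Real.exp S.b * S.Bp) * Real.exp (S.a * (s - x))) * (S.γ : ℝ) :=
            mul_le_mul_of_nonneg_right hk S.γ.coe_nonneg
        _ = (Real.exp S.b * S.Bp * (S.γ : ℝ)) * Real.exp (S.a * (s - x)) := by ring
    have step6 : (∫⁻ s in Set.Iic x, ENNReal.ofReal ((Real.exp S.b * S.Bp * (S.γ : ℝ)) *
          Real.exp (S.a * (s - x))) * Sa) = ENNReal.ofReal ((S.γ : ℝ) * S.K) * Sa := by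
      have hms : Measurable (fun s => ENNReal.ofReal ((Real.exp S.b * S.Bp * (S.γ : ℝ)) *
          Real.exp (S.a * (s - x)))) :=
        ((continuous_const.mul (Real.continuous_exp.comp
          (continuous_const.mul (continuous_id.sub continuous_const)))).measurable).ennreal_ofReal
      rw [lintegral_mul_const Sa hms]
      congr 1
      have hint : Integrable (fun s => (Real.exp S.b * S.Bp * (S.γ : ℝ)) *
          Real.exp (S.a * (s - x))) (volume.restrict (Set.Iic x)) :=
        (AAPrelim.expShiftIntegrableOn S.a x S.ha).const_mul _
      rw [← MeasureTheory.ofReal_integral_eq_lintegral_ofReal hint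
        (ae_of_all _ fun s => mul_nonneg (mul_nonneg (mul_nonneg (Real.exp_pos _).le S.hBp.le)
          S.γ.coe_nonneg) (Real.exp_pos _).le)]
      rw [MeasureTheory.integral_const_mul, AAPrelim.expShiftIntegral S.a x S.ha]
      congr 1
      rw [AASetup.K]
      field_simp
    calc α x ≤ _ := step2
      _ ≤ _ := step3
      _ ≤ _ := (lintegral_mono_ae (ae_of_all _ fun s => le_rfl)).trans step5
      _ = _ := step6
  -- conclude Sa = 0
  have hSa0 : Sa = 0 := by
    by_contra hne
    have hhalf : ∀ x, α x ≤ ENNReal.ofReal (1/2) * Sa := by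
      intro x
      refine (hkey x).trans (mul_le_mul_left (ENNReal.ofReal_le_ofReal hγK) Sa)
    have hSle : Sa ≤ ENNReal.ofReal (1/2) * Sa := iSup_le hhalf
    have hc1 : ENNReal.ofReal (1/2) < 1 := by
      rw [← ENNReal.ofReal_one]
      exact (ENNReal.ofReal_lt_ofReal_iff (by norm_num)).2 (by norm_num)
    have hlt : ENNReal.ofReal (1/2) * Sa < 1 * Sa := by
      rw [mul_comm (ENNReal.ofReal (1/2)) Sa, mul_comm (1:ℝ≥0∞) Sa]
      exact (ENNReal.mul_lt_mul_iff_right hne hSatop).2 hc1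
    rw [one_mul] at hlt
    exact absurd (hSle.trans_lt hlt) (lt_irrefl _)
  have hα0 : α t = 0 :=
    le_antisymm ((le_iSup α t).trans (le_of_eq hSa0)) zero_le
  -- convert back to real convergence
  have h0 : Tendsto (fun n => ENNReal.ofReal (Δ n t)) atTop (𝓝 0) := by
    refine tendsto_of_liminf_eq_limsup ?_ hα0
    refine le_antisymm ?_ ?_
    · exact (liminf_le_limsup).trans hα0.le
    · exact zero_le
  have h1 : Tendsto (fun n => Δ n t) atTop (𝓝 0) := by
    have h2 := (ENNReal.tendsto_toReal (by simp : (0:ℝ≥0∞) ≠ ∞)).comp h0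
    have h3 : (fun n => ((ENNReal.ofReal (Δ n t)).toReal)) = fun n => Δ n t := by
      funext n
      exact ENNReal.toReal_ofReal (hΔ0 n t)
    rw [Function.comp_def, h3] at h2
    simpa using h2
  rw [tendsto_iff_dist_tendsto_zero]
  have : (fun n => dist ((AN n).sol t) (AL.sol t)) = fun n => Δ n t := by
    funext n
    rw [Real.dist_eq, hΔdef]
  rw [this]
  exact h1

end Adm


theorem delayed_lasota_wazewska_type_unique_almost_automorphic_solution
    (δ p : ℝ → ℝ)
    (hδc : Continuous δ) (hδb : ∃ C, ∀ t, |δ t| ≤ C) (hδaa : AlmostAutomorphic δ)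
    (hpc : Continuous p) (hpb : ∃ C, ∀ t, |p t| ≤ C) (hpaa : AlmostAutomorphic p)
    (hδpos : ∀ t : ℝ, 0 < δ t) (hppos : ∀ t : ℝ, 0 < p t)
    (M : ℝ) (hM : ErgodicMeanR δ M) (hMpos : 0 < M)
    (τ : ℝ) (hτ : 0 < τ) :
    ∃ γ₀ > (0 : ℝ), ∀ (g : ℝ → ℝ) (γ : NNReal),
      (∀ x : ℝ, 0 ≤ g x) → LipschitzWith γ g → (γ : ℝ) ≤ γ₀ →
      ∃! y : ℝ → ℝ,
        AlmostAutomorphic y ∧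
        (∃ C, ∀ t : ℝ, |y t| ≤ C) ∧
        (∀ t : ℝ, HasDerivAt y (-δ t * y t + p t * g (y (t - τ))) t) := by
  classical
  obtain ⟨Cδ, hCδ⟩ := hδb
  obtain ⟨Cp, hCp⟩ := hpb
  have hCp0 : 0 < Cp := lt_of_lt_of_le (hppos 0) ((le_abs_self _).trans (hCp 0))
  have hCδ0 : 0 ≤ Cδ := (abs_nonneg _).trans (hCδ 0)
  obtain ⟨T₁, hT₁, hTprop⟩ := hM (M/2) (by positivity)
  set a : ℝ := M/2 with hadef
  set b : ℝ := M * T₁ with hbdef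
  have ha : 0 < a := by rw [hadef]; positivity
  have hb : 0 ≤ b := by rw [hbdef]; positivity
  -- the crucial integral lower bound for δ
  have hilb : ∀ s t : ℝ, s ≤ t → a * (t - s) - b ≤ ∫ u in s..t, δ u := by
    intro s t h
    by_cases hc : 2 * T₁ ≤ t - s
    · set T : ℝ := (t - s)/2 with hTdef
      set ξ : ℝ := (s + t)/2 with hξdef
      have hTT₁ : T ≥ T₁ := by rw [hTdef]; linarith
      have hprop := hTprop T hTT₁ ξ
      have he1 : -T + ξ = s := by rw [hTdef, hξdef]; ring
      have he2 : T + ξ = t := by rw [hTdef, hξdef]; ring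
      rw [he1, he2] at hprop
      have habs := (abs_lt.1 hprop).1
      have h2T : 0 < 2 * T := by rw [hTdef]; linarith
      set I : ℝ := ∫ u in s..t, δ u with hIdef
      have hgt : M/2 < (2*T)⁻¹ * I := by linarith
      have hmul := mul_lt_mul_of_pos_right hgt h2T
      have hcancel : (2*T)⁻¹ * I * (2*T) = I := by field_simp; exact mul_div_cancel_left₀ I (by linarith : T ≠ 0)
      rw [hcancel] at hmul
      have h2Teq : 2 * T = t - s := by rw [hTdef]; ring
      rw [h2Teq] at hmul
      rw [hadef]
      linarith
    · have hnn : 0 ≤ ∫ u in s..t, δ u :=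
        intervalIntegral.integral_nonneg h (fun u _ => (hδpos u).le)
      have : a * (t - s) - b ≤ 0 := by
        rw [hadef, hbdef]
        nlinarith
      linarith
  -- the contraction constant bound
  set K0 : ℝ := Cp * Real.exp b / a with hK0def
  have hK0 : 0 < K0 := by rw [hK0def]; positivity
  refine ⟨1/(2*K0), by positivity, ?_⟩
  intro g γ hg0 hgl hγle
  have hγK0 : (γ : ℝ) * (Cp * Real.exp b / a) ≤ 1/2 := by
    have h1 : (γ : ℝ) * K0 ≤ (1/(2*K0)) * K0 :=
      mul_le_mul_of_nonneg_right hγle hK0.le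
    have h2 : (1/(2*K0)) * K0 = 1/2 := by field_simp
    rw [h2] at h1
    rw [← hK0def]
    exact h1
  -- the setup
  set S : AASetup := ⟨a, b, Cδ, Cp, τ, g, γ, ha, hb, hCδ0, hCp0, hτ, hg0, hgl, hγK0⟩
    with hSdef
  set A₀ : Adm S := ⟨δ, p, hδc.measurable, hpc.measurable,
    fun t => (hδpos t).le, fun t => (hppos t).le,
    fun t => (le_abs_self _).trans (hCδ t),
    fun t => (le_abs_self _).trans (hCp t),
    hilb⟩ with hA₀def
  refine ⟨fun t => A₀.sol t, ⟨?_, ⟨2 * S.K * S.g 0, fun t => A₀.sol_abs_le t⟩,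
    fun t => A₀.sol_hasDerivAt hδc hpc t⟩, ?_⟩
  · -- almost automorphy of the solution
    refine ⟨A₀.sol.continuous, ?_⟩
    intro σ
    obtain ⟨k₁, hk₁, δt, hδt1, hδt2⟩ := hδaa.2 σ
    obtain ⟨k₂, hk₂, pt, hpt1, hpt2⟩ := hpaa.2 (σ ∘ k₁)
    refine ⟨k₁ ∘ k₂, hk₁.comp hk₂, ?_⟩
    set c : ℕ → ℝ := fun n => σ (k₁ (k₂ n)) with hcdef
    have hδ1 : ∀ x, Tendsto (fun n => δ (x + c n)) atTop (𝓝 (δt x)) :=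
      fun x => (hδt1 x).comp hk₂.tendsto_atTop
    have hδ2 : ∀ x, Tendsto (fun n => δt (x - c n)) atTop (𝓝 (δ x)) :=
      fun x => (hδt2 x).comp hk₂.tendsto_atTop
    have hp1 : ∀ x, Tendsto (fun n => p (x + c n)) atTop (𝓝 (pt x)) := fun x => hpt1 x
    have hp2 : ∀ x, Tendsto (fun n => pt (x - c n)) atTop (𝓝 (p x)) := fun x => hpt2 x
    -- limit coefficients are admissible
    have hδtm : Measurable δt := by
      refine measurable_of_tendsto_metrizable
        (f := fun n => fun x => δ (x + c n))
        (fun n => (hδc.comp (continuous_id.add continuous_const)).measurable) ?_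
      exact tendsto_pi_nhds.2 hδ1
    have hptm : Measurable pt := by
      refine measurable_of_tendsto_metrizable
        (f := fun n => fun x => p (x + c n))
        (fun n => (hpc.comp (continuous_id.add continuous_const)).measurable) ?_
      exact tendsto_pi_nhds.2 hp1
    have hDconv : ∀ s t : ℝ, Tendsto (fun n => ∫ u in s..t, δ (u + c n)) atTop
        (𝓝 (∫ u in s..t, δt u)) := by
      intro s t
      refine intervalIntegral.tendsto_integral_filter_of_dominated_convergence
        (fun _ => Cδ) ?_ ?_ ?_ ?_
      · exact Eventually.of_forall fun n =>
          ((hδc.comp (continuous_id.add continuous_const)).measurable.aestronglyMeasurable).restrict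
      · refine Eventually.of_forall fun n => ae_of_all _ fun z _ => ?_
        rw [Real.norm_eq_abs]
        exact hCδ _
      · exact intervalIntegrable_const
      · exact ae_of_all _ fun z _ => hδ1 z
    set AL : Adm S := ⟨δt, pt, hδtm, hptm,
      fun x => ge_of_tendsto' (hδ1 x) (fun n => (hδpos _).le),
      fun x => ge_of_tendsto' (hp1 x) (fun n => (hppos _).le),
      fun x => le_of_tendsto' (hδ1 x) (fun n => (le_abs_self _).trans (hCδ _)),
      fun x => le_of_tendsto' (hp1 x) (fun n => (le_abs_self _).trans (hCp _)),
      by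
        intro s t h
        refine ge_of_tendsto' (hDconv s t) (fun n => ?_)
        rw [intervalIntegral.integral_comp_add_right]
        have := hilb (s + c n) (t + c n) (by linarith)
        have harith : t + c n - (s + c n) = t - s := by ring
        rwa [harith] at this⟩ with hALdef
    refine ⟨fun x => AL.sol x, ?_, ?_⟩
    · intro x
      have htr := Adm.sol_tendsto (fun n => A₀.shift (c n)) AL hδ1 hp1 x
      exact Tendsto.congr (fun n => A₀.sol_shift (c n) x) htr
    · intro x
      have hδ2' : ∀ z, Tendsto (fun n => (fun m => (AL.shift (-(c m))).δ z) n) atTop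
          (𝓝 (A₀.δ z)) := by
        intro z
        have := hδ2 z
        refine this.congr fun n => ?_
        show δt (z - c n) = δt (z + -(c n))
        rw [sub_eq_add_neg]
      have hp2' : ∀ z, Tendsto (fun n => (AL.shift (-(c n))).p z) atTop (𝓝 (A₀.p z)) := by
        intro z
        have := hp2 z
        refine this.congr fun n => ?_
        show pt (z - c n) = pt (z + -(c n))
        rw [sub_eq_add_neg]
      have htr := Adm.sol_tendsto (fun n => AL.shift (-(c n))) A₀ hδ2' hp2' x
      refine Tendsto.congr (fun n => ?_) htr
      rw [AL.sol_shift (-(c n)) x, sub_eq_add_neg]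
      rfl
  · -- uniqueness
    rintro y' ⟨hy'aa, ⟨C, hy'b⟩, hy'd⟩
    funext t
    exact A₀.eq_sol_of_ode y' C hy'b hy'd hδc t
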